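/- For every real L > 0, L · ρ(𝒴({z ∈ X : Δ_z ≤ 15/√L})) ≤ 900 · ψ*. (Lemma 4.1 of the paper.) -/

import Mathlib

open Matrix

noncomputable section

/-- The probability simplex of design weights over the arm set `X`. -/
def designSimplex {d : ℕ} (X : Finset (Fin d → ℝ)) : Set ((Fin d → ℝ) → ℝ) :=
  {l | (∀ x, 0 ≤ l x) ∧ ∑ x ∈ X, l x = 1}

/-- The design matrix `A(λ) = ∑_{x ∈ X} λ_x x xᵀ`. -/
def designMat {d : ℕ} (X : Finset (Fin d → ℝ)) (l : (Fin d → ℝ) → ℝ) :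
    Matrix (Fin d) (Fin d) ℝ :=
  ∑ x ∈ X, l x • Matrix.vecMulVec x x

/-- The quadratic form `y ↦ yᵀ A(λ)⁻¹ y`. -/
def quadInv {d : ℕ} (X : Finset (Fin d → ℝ)) (l : (Fin d → ℝ) → ℝ)
    (y : Fin d → ℝ) : ℝ :=
  y ⬝ᵥ (designMat X l)⁻¹.mulVec y

/-- The optimal design value `ρ(A) = inf_{λ : A(λ) invertible} max_{y ∈ A} yᵀA(λ)⁻¹y`
(the maximum over the empty set being `0`). -/
def rho {d : ℕ} (X : Finset (Fin d → ℝ)) (A : Set (Fin d → ℝ)) : ℝ :=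
  sInf {v | ∃ l ∈ designSimplex X, IsUnit (designMat X l).det ∧
    v = sSup (insert 0 (quadInv X l '' A))}

/-- `𝒴(S) = {x - x' : x, x' ∈ S, x ≠ x'}`. -/
def Yset {d : ℕ} (S : Set (Fin d → ℝ)) : Set (Fin d → ℝ) :=
  {y | ∃ x ∈ S, ∃ x' ∈ S, x ≠ x' ∧ y = x - x'}

/-- `𝒴*(S) = {x* - x : x ∈ S, x ≠ x*}`. -/
def YstarSet {d : ℕ} (xstar : Fin d → ℝ) (S : Set (Fin d → ℝ)) : Set (Fin d → ℝ) :=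
  (fun x => xstar - x) '' (S \ {xstar})

/-- `ψ* = inf_{λ : A(λ) invertible} max_{x ∈ X, x ≠ x*} (x-x*)ᵀA(λ)⁻¹(x-x*)/Δ_x²`. -/
def psiStar {d : ℕ} (X : Finset (Fin d → ℝ)) (θstar xstar : Fin d → ℝ) : ℝ :=
  sInf {v | ∃ l ∈ designSimplex X, IsUnit (designMat X l).det ∧
    v = sSup (insert 0
      ((fun x => quadInv X l (x - xstar) / (θstar ⬝ᵥ (xstar - x)) ^ 2) ''
        ((X : Set (Fin d → ℝ)) \ {xstar})))}

/- ### Auxiliary lemmas -/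

lemma vecMulVec_mulVec' {d : ℕ} (x u : Fin d → ℝ) :
    (Matrix.vecMulVec x x).mulVec u = (x ⬝ᵥ u) • x := by
  funext i
  simp only [Matrix.mulVec, Matrix.vecMulVec_apply, dotProduct, Pi.smul_apply, smul_eq_mul,
    Finset.sum_mul]
  exact Finset.sum_congr rfl fun j _ => by ring

lemma designMat_mulVec {d : ℕ} (X : Finset (Fin d → ℝ)) (l : (Fin d → ℝ) → ℝ) (u : Fin d → ℝ) :
    (designMat X l).mulVec u = ∑ x ∈ X, (l x * (x ⬝ᵥ u)) • x := by
  unfold designMat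
  rw [show (∑ x ∈ X, l x • Matrix.vecMulVec x x).mulVec u
      = ∑ x ∈ X, (l x • Matrix.vecMulVec x x).mulVec u from
    map_sum (Matrix.mulVec.addMonoidHomLeft u) _ X]
  refine Finset.sum_congr rfl fun x _ => ?_
  rw [Matrix.smul_mulVec, vecMulVec_mulVec', smul_smul]

lemma quad_design {d : ℕ} (X : Finset (Fin d → ℝ)) (l : (Fin d → ℝ) → ℝ) (u : Fin d → ℝ) :
    u ⬝ᵥ (designMat X l).mulVec u = ∑ x ∈ X, l x * (x ⬝ᵥ u) ^ 2 := by
  rw [designMat_mulVec]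
  rw [show u ⬝ᵥ (∑ x ∈ X, (l x * (x ⬝ᵥ u)) • x) = ∑ x ∈ X, u ⬝ᵥ ((l x * (x ⬝ᵥ u)) • x) by
    simp only [dotProduct, Finset.sum_apply, Finset.mul_sum]; exact Finset.sum_comm]
  refine Finset.sum_congr rfl fun x _ => ?_
  rw [dotProduct_smul, smul_eq_mul, dotProduct_comm]
  ring

lemma quad_design_nonneg {d : ℕ} (X : Finset (Fin d → ℝ)) (l : (Fin d → ℝ) → ℝ)
    (hl : ∀ x, 0 ≤ l x) (u : Fin d → ℝ) :
    0 ≤ u ⬝ᵥ (designMat X l).mulVec u := by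
  rw [quad_design]
  exact Finset.sum_nonneg fun x _ => mul_nonneg (hl x) (sq_nonneg _)

lemma quadInv_nonneg {d : ℕ} (X : Finset (Fin d → ℝ)) (l : (Fin d → ℝ) → ℝ)
    (hl : ∀ x, 0 ≤ l x) (hdet : IsUnit (designMat X l).det) (w : Fin d → ℝ) :
    0 ≤ quadInv X l w := by
  have hw : (designMat X l).mulVec ((designMat X l)⁻¹.mulVec w) = w := by
    rw [Matrix.mulVec_mulVec, Matrix.mul_nonsing_inv _ hdet, Matrix.one_mulVec]
  calc (0:ℝ) ≤ ((designMat X l)⁻¹.mulVec w) ⬝ᵥ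
        (designMat X l).mulVec ((designMat X l)⁻¹.mulVec w) := quad_design_nonneg X l hl _
    _ = ((designMat X l).mulVec ((designMat X l)⁻¹.mulVec w)) ⬝ᵥ (designMat X l)⁻¹.mulVec w :=
        dotProduct_comm _ _
    _ = quadInv X l w := by rw [hw]; rfl

lemma quadInv_sub_le {d : ℕ} (X : Finset (Fin d → ℝ)) (l : (Fin d → ℝ) → ℝ)
    (hl : ∀ x, 0 ≤ l x) (hdet : IsUnit (designMat X l).det) (u v : Fin d → ℝ) :
    quadInv X l (u - v) ≤ 2 * quadInv X l u + 2 * quadInv X l v := by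
  have key : quadInv X l (u + v) + quadInv X l (u - v)
      = 2 * quadInv X l u + 2 * quadInv X l v := by
    simp only [quadInv, Matrix.mulVec_add, Matrix.mulVec_sub, dotProduct_add, dotProduct_sub,
      add_dotProduct, sub_dotProduct]
    ring
  linarith [quadInv_nonneg X l hl hdet (u + v)]

lemma quadInv_zero' {d : ℕ} (X : Finset (Fin d → ℝ)) (l : (Fin d → ℝ) → ℝ) :
    quadInv X l 0 = 0 := by
  simp [quadInv]

lemma exists_dot_ne {d : ℕ} (X : Finset (Fin d → ℝ))
    (hspan : Submodule.span ℝ (X : Set (Fin d → ℝ)) = ⊤)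
    (w : Fin d → ℝ) (hw : w ≠ 0) : ∃ x ∈ X, x ⬝ᵥ w ≠ 0 := by
  by_contra h
  push_neg at h
  apply hw
  let f : (Fin d → ℝ) →ₗ[ℝ] ℝ :=
    { toFun := fun v => v ⬝ᵥ w
      map_add' := fun a b => add_dotProduct a b w
      map_smul' := fun c a => smul_dotProduct c a w }
  have hker : Submodule.span ℝ (X : Set (Fin d → ℝ)) ≤ LinearMap.ker f :=
    Submodule.span_le.2 fun x hx => LinearMap.mem_ker.2 (h x hx)
  rw [hspan, top_le_iff] at hker
  have hfw : f w = 0 := by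
    have : w ∈ LinearMap.ker f := by rw [hker]; trivial
    exact LinearMap.mem_ker.1 this
  exact dotProduct_self_eq_zero.1 hfw

lemma designMat_isHermitian {d : ℕ} (X : Finset (Fin d → ℝ)) (l : (Fin d → ℝ) → ℝ) :
    (designMat X l).IsHermitian := by
  show (designMat X l)ᴴ = designMat X l
  ext i j
  simp [designMat, Matrix.conjTranspose_apply, Matrix.sum_apply, Matrix.vecMulVec_apply,
    mul_comm]

lemma designMat_posDef {d : ℕ} (X : Finset (Fin d → ℝ))
    (hspan : Submodule.span ℝ (X : Set (Fin d → ℝ)) = ⊤)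
    (l : (Fin d → ℝ) → ℝ) (hl : ∀ x ∈ X, 0 < l x) :
    (designMat X l).PosDef := by
  refine Matrix.posDef_iff_dotProduct_mulVec.2 ⟨designMat_isHermitian X l, fun w hw => ?_⟩
  have hstar : star w = w := by simp
  rw [hstar, quad_design]
  obtain ⟨x0, hx0, hx0w⟩ := exists_dot_ne X hspan w hw
  refine Finset.sum_pos' (fun x hx => mul_nonneg (hl x hx).le (sq_nonneg _)) ⟨x0, hx0, ?_⟩
  exact mul_pos (hl x0 hx0) (by positivity)

lemma exists_feasible {d : ℕ} (X : Finset (Fin d → ℝ))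
    (hspan : Submodule.span ℝ (X : Set (Fin d → ℝ)) = ⊤) (hne : X.Nonempty) :
    ∃ l ∈ designSimplex X, IsUnit (designMat X l).det := by
  refine ⟨fun _ => (X.card : ℝ)⁻¹, ⟨fun _ => by positivity, ?_⟩, ?_⟩
  · rw [Finset.sum_const, nsmul_eq_mul, mul_inv_cancel₀]
    exact_mod_cast Finset.card_ne_zero_of_mem hne.choose_spec
  · have hpd := designMat_posDef X hspan (fun _ => (X.card : ℝ)⁻¹)
      (fun x hx => by
        have : (0:ℝ) < X.card := by exact_mod_cast Finset.card_pos.2 hne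
        positivity)
    exact isUnit_iff_ne_zero.2 hpd.det_pos.ne'

/-- The key per-design bound. -/
lemma main_bound {d : ℕ} (X : Finset (Fin d → ℝ)) (θstar xstar : Fin d → ℝ)
    (hxstar : xstar ∈ X)
    (hmax : ∀ x ∈ X, x ≠ xstar → θstar ⬝ᵥ x < θstar ⬝ᵥ xstar)
    (L : ℝ) (hL : 0 < L)
    (l : (Fin d → ℝ) → ℝ) (hl : l ∈ designSimplex X)
    (hdet : IsUnit (designMat X l).det) :
    L * sSup (insert 0 (quadInv X l ''
        Yset {z | z ∈ X ∧ θstar ⬝ᵥ (xstar - z) ≤ 15 / Real.sqrt L}))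
      ≤ 900 * sSup (insert 0
        ((fun x => quadInv X l (x - xstar) / (θstar ⬝ᵥ (xstar - x)) ^ 2) ''
          ((X : Set (Fin d → ℝ)) \ {xstar}))) := by
  obtain ⟨hlpos, -⟩ := hl
  set Pimg := insert (0:ℝ)
    ((fun x => quadInv X l (x - xstar) / (θstar ⬝ᵥ (xstar - x)) ^ 2) ''
      ((X : Set (Fin d → ℝ)) \ {xstar})) with hPimg
  have hPbdd : BddAbove Pimg :=
    (((X.finite_toSet.diff (t := {xstar})).image _).insert 0).bddAbove
  have hp0 : 0 ≤ sSup Pimg := le_csSup hPbdd (Set.mem_insert _ _)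
  have hzbound : ∀ z : Fin d → ℝ, z ∈ X → θstar ⬝ᵥ (xstar - z) ≤ 15 / Real.sqrt L →
      quadInv X l (z - xstar) ≤ 225 / L * sSup Pimg := by
    intro z hzX hzΔ
    by_cases hz : z = xstar
    · subst hz
      rw [sub_self, quadInv_zero']
      positivity
    · have hmem : (quadInv X l (z - xstar) / (θstar ⬝ᵥ (xstar - z)) ^ 2) ∈ Pimg :=
        Set.mem_insert_of_mem _ ⟨z, ⟨hzX, hz⟩, rfl⟩
      have hle : quadInv X l (z - xstar) / (θstar ⬝ᵥ (xstar - z)) ^ 2 ≤ sSup Pimg :=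
        le_csSup hPbdd hmem
      have hΔpos : 0 < θstar ⬝ᵥ (xstar - z) := by
        have := hmax z hzX hz
        rw [dotProduct_sub]; linarith
      have hΔsq : (θstar ⬝ᵥ (xstar - z)) ^ 2 ≤ 225 / L := by
        have h1 : (θstar ⬝ᵥ (xstar - z)) ^ 2 ≤ (15 / Real.sqrt L) ^ 2 :=
          pow_le_pow_left₀ hΔpos.le hzΔ 2
        have h2 : (15 / Real.sqrt L) ^ 2 = 225 / L := by
          rw [div_pow, Real.sq_sqrt hL.le]; norm_num
        linarith
      have hq : quadInv X l (z - xstar) ≤ sSup Pimg * (θstar ⬝ᵥ (xstar - z)) ^ 2 :=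
        (div_le_iff₀ (by positivity)).1 hle
      calc quadInv X l (z - xstar) ≤ sSup Pimg * (θstar ⬝ᵥ (xstar - z)) ^ 2 := hq
        _ ≤ sSup Pimg * (225 / L) := mul_le_mul_of_nonneg_left hΔsq hp0
        _ = 225 / L * sSup Pimg := by ring
  have hmain : sSup (insert 0 (quadInv X l ''
      Yset {z | z ∈ X ∧ θstar ⬝ᵥ (xstar - z) ≤ 15 / Real.sqrt L}))
      ≤ 900 / L * sSup Pimg := by
    refine csSup_le (Set.insert_nonempty _ _) ?_
    rintro v hv
    rcases Set.mem_insert_iff.1 hv with rfl | ⟨y, hy, rfl⟩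
    · positivity
    · obtain ⟨z, hz, z', hz', hne, rfl⟩ := hy
      have h1 := hzbound z hz.1 hz.2
      have h2 := hzbound z' hz'.1 hz'.2
      have h3 : quadInv X l (z - z')
          ≤ 2 * quadInv X l (z - xstar) + 2 * quadInv X l (z' - xstar) := by
        have := quadInv_sub_le X l hlpos hdet (z - xstar) (z' - xstar)
        rwa [sub_sub_sub_cancel_right] at this
      calc quadInv X l (z - z')
          ≤ 2 * (225 / L * sSup Pimg) + 2 * (225 / L * sSup Pimg) := by linarith
        _ = 900 / L * sSup Pimg := by ring
  calc L * sSup (insert 0 (quadInv X l ''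
        Yset {z | z ∈ X ∧ θstar ⬝ᵥ (xstar - z) ≤ 15 / Real.sqrt L}))
      ≤ L * (900 / L * sSup Pimg) := mul_le_mul_of_nonneg_left hmain hL.le
    _ = 900 * sSup Pimg := by field_simp

theorem lemma_partial_complexity {d : ℕ} (X : Finset (Fin d → ℝ))
    (θstar xstar : Fin d → ℝ)
    (hspan : Submodule.span ℝ (X : Set (Fin d → ℝ)) = ⊤)
    (hnorm : ∀ x ∈ X, x ⬝ᵥ x ≤ 1)
    (hxstar : xstar ∈ X)
    (hmax : ∀ x ∈ X, x ≠ xstar → θstar ⬝ᵥ x < θstar ⬝ᵥ xstar)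
    (L : ℝ) (hL : 0 < L) :
    L * rho X (Yset {z | z ∈ X ∧ θstar ⬝ᵥ (xstar - z) ≤ 15 / Real.sqrt L})
      ≤ 900 * psiStar X θstar xstar := by
  unfold rho psiStar
  set S : Set (Fin d → ℝ) := {z | z ∈ X ∧ θstar ⬝ᵥ (xstar - z) ≤ 15 / Real.sqrt L} with hS
  set Rs : Set ℝ := {v | ∃ l ∈ designSimplex X, IsUnit (designMat X l).det ∧
    v = sSup (insert 0 (quadInv X l '' Yset S))} with hRs
  set Ps : Set ℝ := {v | ∃ l ∈ designSimplex X, IsUnit (designMat X l).det ∧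
    v = sSup (insert 0
      ((fun x => quadInv X l (x - xstar) / (θstar ⬝ᵥ (xstar - x)) ^ 2) ''
        ((X : Set (Fin d → ℝ)) \ {xstar})))} with hPs
  -- finiteness of Yset S
  have hSfin : S.Finite := X.finite_toSet.subset fun z hz => hz.1
  have hYfin : (Yset S).Finite := by
    refine (hSfin.image2 (fun a b => a - b) hSfin).subset ?_
    rintro y ⟨x, hx, x', hx', -, rfl⟩
    exact Set.mem_image2_of_mem hx hx'
  -- lower bound of Rs
  have hRlb : ∀ v ∈ Rs, (0:ℝ) ≤ v := by
    rintro v ⟨l, hl, hdet, rfl⟩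
    exact le_csSup (((hYfin.image _).insert 0).bddAbove) (Set.mem_insert _ _)
  have hRbdd : BddBelow Rs := ⟨0, hRlb⟩
  -- Ps nonempty
  have hPne : Ps.Nonempty := by
    obtain ⟨l, hl, hdet⟩ := exists_feasible X hspan ⟨xstar, hxstar⟩
    exact ⟨_, l, hl, hdet, rfl⟩
  -- key bound
  have key : ∀ p ∈ Ps, L * sInf Rs ≤ 900 * p := by
    rintro p ⟨l, hl, hdet, rfl⟩
    have hrR : sSup (insert 0 (quadInv X l '' Yset S)) ∈ Rs := ⟨l, hl, hdet, rfl⟩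
    have h1 : sInf Rs ≤ sSup (insert 0 (quadInv X l '' Yset S)) := csInf_le hRbdd hrR
    have h2 := main_bound X θstar xstar hxstar hmax L hL l hl hdet
    calc L * sInf Rs ≤ L * sSup (insert 0 (quadInv X l '' Yset S)) :=
          mul_le_mul_of_nonneg_left h1 hL.le
      _ ≤ _ := h2
  have hfin : (L * sInf Rs) / 900 ≤ sInf Ps :=
    le_csInf hPne fun p hp => by linarith [key p hp]
  linarith
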